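/- Let G be an undirected k-tree with a layer decomposition as above, with t in layer 0 and s in layer r > 0. Then there exists a shortest s–t path whose second vertex is a neighbor of s lying in the lowest layer among all neighbors of s. -/

import Mathlib

/-- The edge set of a complete graph on the vertex set `V`. -/
def cliqueEdges (V : Finset ℕ) : Finset (Sym2 ℕ) :=
  ((V ×ˢ V).filter (fun p => p.1 ≠ p.2)).image (fun p => s(p.1, p.2))

/-- `X` is a clique with respect to the edge set `E`. -/
def IsCliqueIn (E : Finset (Sym2 ℕ)) (X : Finset ℕ) : Prop :=
  ∀ x ∈ X, ∀ y ∈ X, x ≠ y → s(x, y) ∈ E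

/-- Inductive definition of a `k`-tree with vertex set `V` and edge set `E`:
a `k`-clique is a `k`-tree, and one may add a new vertex joined to all
vertices of an existing `k`-clique (the support). -/
inductive IsKTree (k : ℕ) : Finset ℕ → Finset (Sym2 ℕ) → Prop where
  | base (V : Finset ℕ) (h : V.card = k) : IsKTree k V (cliqueEdges V)
  | extend (V : Finset ℕ) (E : Finset (Sym2 ℕ)) (X : Finset ℕ) (v : ℕ)
      (ht : IsKTree k V E) (hXV : X ⊆ V) (hX : X.card = k)
      (hclique : IsCliqueIn E X) (hv : v ∉ V) :
      IsKTree k (insert v V) (E ∪ X.image (fun x => s(x, v)))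

/-- A layer decomposition of the (undirected) graph `(V, E)` with respect to
the target vertex `t`: layer `0` is a `k`-clique containing `t`; each vertex
in a layer `i > 0` has exactly `k` neighbours in strictly lower layers, and
these form a `k`-clique; no two vertices in the same layer are adjacent. -/
def LayerDecomp (k : ℕ) (V : Finset ℕ) (E : Finset (Sym2 ℕ))
    (layer : ℕ → ℕ) (t : ℕ) : Prop :=
  t ∈ V ∧ layer t = 0 ∧
  (V.filter (fun v => layer v = 0)).card = k ∧
  IsCliqueIn E (V.filter (fun v => layer v = 0)) ∧
  (∀ v ∈ V, 0 < layer v →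
    (V.filter (fun u => s(u, v) ∈ E ∧ layer u < layer v)).card = k ∧
    IsCliqueIn E (V.filter (fun u => s(u, v) ∈ E ∧ layer u < layer v))) ∧
  (∀ u ∈ V, ∀ v ∈ V, s(u, v) ∈ E → layer u ≠ layer v)

/-- A walk from `s` to `t` in the graph `(V, E)`, as a list of vertices. -/
def IsWalk (V : Finset ℕ) (E : Finset (Sym2 ℕ)) (s t : ℕ) (p : List ℕ) : Prop :=
  p.head? = some s ∧ p.getLast? = some t ∧ (∀ v ∈ p, v ∈ V) ∧
  p.Chain' (fun a b => s(a, b) ∈ E)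

/-- A shortest path from `s` to `t`: a walk of minimum length. -/
def IsShortestPath (V : Finset ℕ) (E : Finset (Sym2 ℕ)) (s t : ℕ)
    (p : List ℕ) : Prop :=
  IsWalk V E s t p ∧ ∀ q : List ℕ, IsWalk V E s t q → p.length ≤ q.length


lemma walk_extend {V : Finset ℕ} {E : Finset (Sym2 ℕ)} {t a b : ℕ} {q : List ℕ}
    (ha : a ∈ V) (hab : s(a, b) ∈ E) (hq : IsWalk V E b t q) :
    IsWalk V E a t (a :: q) := by
  obtain ⟨h1, h2, h3, h4⟩ := hq
  cases q with
  | nil => simp at h1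
  | cons c q' =>
    simp only [List.head?_cons, Option.some.injEq] at h1
    subst h1
    refine ⟨rfl, ?_, ?_, ?_⟩
    · rwa [List.getLast?_cons_cons]
    · intro x hx
      rcases List.mem_cons.mp hx with h | h
      · exact h ▸ ha
      · exact h3 x h
    · exact List.isChain_cons_cons.mpr ⟨hab, h4⟩

lemma walk_tail {V : Finset ℕ} {E : Finset (Sym2 ℕ)} {t a b : ℕ} {q : List ℕ}
    (hq : IsWalk V E a t (a :: b :: q)) :
    IsWalk V E b t (b :: q) ∧ s(a, b) ∈ E ∧ b ∈ V := by
  obtain ⟨h1, h2, h3, h4⟩ := hq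
  rw [List.getLast?_cons_cons] at h2
  replace h4 := List.isChain_cons_cons.mp h4
  exact ⟨⟨rfl, h2, fun x hx => h3 x (List.mem_cons_of_mem _ hx), h4.2⟩, h4.1,
    h3 b (by simp)⟩

lemma walk_two {V : Finset ℕ} {E : Finset (Sym2 ℕ)} {a t : ℕ} {p : List ℕ}
    (h : IsWalk V E a t p) (hat : a ≠ t) : ∃ c q', p = a :: c :: q' := by
  obtain ⟨h1, h2, -, -⟩ := h
  cases p with
  | nil => simp at h1
  | cons x q =>
    have hxa : x = a := by simpa using h1
    cases q with
    | nil =>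
      exfalso
      have hxt : x = t := by simpa using h2
      exact hat (hxa ▸ hxt)
    | cons c q' => exact ⟨c, q', by rw [hxa]⟩

/-- Key lemma: if `a` and `b` are adjacent with `layer a < layer b`, then any
walk from `b` to `t` can be converted into a walk from `a` to `t` which is no
longer. -/
lemma lower_neighbor_walk (k : ℕ) (V : Finset ℕ) (E : Finset (Sym2 ℕ))
    (layer : ℕ → ℕ) (t : ℕ) (hlay : LayerDecomp k V E layer t) :
    ∀ n (q : List ℕ), q.length ≤ n → ∀ a b, a ∈ V → b ∈ V → s(a, b) ∈ E →
      layer a < layer b → IsWalk V E b t q →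
      ∃ p, IsWalk V E a t p ∧ p.length ≤ q.length := by
  obtain ⟨htV, hlt, hcard0, hclq0, hup, hne⟩ := hlay
  intro n
  induction n with
  | zero =>
    intro q hq a b _ _ _ _ hw
    rw [Nat.le_zero, List.length_eq_zero_iff] at hq
    subst hq
    exact absurd hw.1 (by simp)
  | succ n ih =>
    intro q hq a b haV hbV hab hl hw
    have hbt : b ≠ t := by
      intro hbt
      rw [hbt, hlt] at hl
      omega
    -- q must have length at least 2
    obtain ⟨c, q', rfl⟩ := walk_two hw hbt
    · obtain ⟨hwc, hbc, hcV⟩ := walk_tail hw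
      have hlen : (c :: q').length ≤ n := by
        simp only [List.length_cons] at hq ⊢; omega
      have hlbc : layer b ≠ layer c := hne b hbV c hcV hbc
      rcases lt_or_gt_of_ne hlbc with hcase | hcase
      · -- layer c > layer b : go down from c, then recurse
        obtain ⟨q2, hq2, hq2len⟩ := ih (c :: q') hlen b c hbV hcV hbc hcase hwc
        obtain ⟨p, hp, hplen⟩ := ih q2 (le_trans hq2len hlen) a b haV hbV hab hl hq2
        refine ⟨p, hp, ?_⟩
        simp only [List.length_cons] at hplen hq2len ⊢
        omega
      · -- layer c < layer b : a and c are both in the lower clique of b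
        have hbpos : 0 < layer b := Nat.pos_of_ne_zero (by omega)
        obtain ⟨-, hclq⟩ := hup b hbV hbpos
        by_cases hac : a = c
        · exact ⟨c :: q', hac ▸ hwc, by simp⟩
        · have haX : a ∈ V.filter (fun u => s(u, b) ∈ E ∧ layer u < layer b) := by
            simp only [Finset.mem_filter]
            exact ⟨haV, hab, hl⟩
          have hcX : c ∈ V.filter (fun u => s(u, b) ∈ E ∧ layer u < layer b) := by
            simp only [Finset.mem_filter]
            exact ⟨hcV, by rwa [Sym2.eq_swap], hcase⟩
          have hedge : s(a, c) ∈ E := hclq a haX c hcX hac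
          exact ⟨a :: c :: q', walk_extend haV hedge hwc, by simp⟩

/-- In a layered `k`-tree with `t` in layer `0` and `s` in a layer `r > 0`,
there is a shortest `s`–`t` path whose second vertex is a neighbour of `s`
lying in the lowest layer among all neighbours of `s`. -/
theorem exists_shortest_path_lowest_neighbor (k : ℕ) (V : Finset ℕ)
    (E : Finset (Sym2 ℕ)) (h : IsKTree k V E)
    (layer : ℕ → ℕ) (t : ℕ) (hlay : LayerDecomp k V E layer t)
    (s : ℕ) (hs : s ∈ V) (hr : 0 < layer s)
    (hconn : ∃ q : List ℕ, IsWalk V E s t q) :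
    ∃ p : List ℕ, IsShortestPath V E s t p ∧
      ∃ v : ℕ, p[1]? = some v ∧ s(s, v) ∈ E ∧
        ∀ u ∈ V, s(s, u) ∈ E → layer v ≤ layer u := by
  classical
  obtain ⟨htV, hlt, hcard0, hclq0, hup, hneq⟩ := hlay
  have hlay' : LayerDecomp k V E layer t := ⟨htV, hlt, hcard0, hclq0, hup, hneq⟩
  have hst : s ≠ t := fun hst => by rw [hst, hlt] at hr; omega
  -- the set of lengths of walks from s to t
  set S : Set ℕ := {n | ∃ p : List ℕ, IsWalk V E s t p ∧ p.length = n} with hS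
  have hSne : S.Nonempty := by
    obtain ⟨q, hq⟩ := hconn
    exact ⟨q.length, q, hq, rfl⟩
  obtain ⟨p0, hp0, hp0len⟩ : ∃ p : List ℕ, IsWalk V E s t p ∧ p.length = sInf S :=
    Nat.sInf_mem hSne
  -- destructure p0 as s :: u :: rest
  obtain ⟨u, rest, rfl⟩ := walk_two hp0 hst
  obtain ⟨hwu, hsu, huV⟩ := walk_tail hp0
  -- the minimal-layer neighbour v of s
  have huN : u ∈ V.filter (fun u => s(s, u) ∈ E) := by
    simp only [Finset.mem_filter]; exact ⟨huV, hsu⟩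
  obtain ⟨v, hvN, hvmin⟩ :=
    Finset.exists_min_image (V.filter (fun u => s(s, u) ∈ E)) layer ⟨u, huN⟩
  simp only [Finset.mem_filter] at hvN
  obtain ⟨hvV, hsv⟩ := hvN
  have hvmin' : ∀ w ∈ V, s(s, w) ∈ E → layer v ≤ layer w := fun w hwV hw =>
    hvmin w (by simp only [Finset.mem_filter]; exact ⟨hwV, hw⟩)
  -- s has a neighbour in a strictly lower layer, so layer v < layer s
  obtain ⟨hcards, hclqs⟩ := hup s hs hr
  have hk : 0 < k := by
    rw [← hcard0]
    exact Finset.card_pos.mpr ⟨t, by simp only [Finset.mem_filter]; exact ⟨htV, hlt⟩⟩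
  obtain ⟨w, hw⟩ : (V.filter (fun u => s(u, s) ∈ E ∧ layer u < layer s)).Nonempty := by
    apply Finset.card_pos.mp; omega
  simp only [Finset.mem_filter] at hw
  have hvs : layer v < layer s :=
    lt_of_le_of_lt (hvmin' w hw.1 (by rw [Sym2.eq_swap]; exact hw.2.1)) hw.2.2
  -- get a walk from v of length ≤ (u :: rest).length
  obtain ⟨qv, hqv, hqvlen⟩ :
      ∃ qv, IsWalk V E v t qv ∧ qv.length ≤ (u :: rest).length := by
    by_cases hvu : v = u
    · exact ⟨u :: rest, hvu ▸ hwu, le_refl _⟩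
    · have hlsu : layer s ≠ layer u := hneq s hs u huV hsu
      rcases lt_or_gt_of_ne hlsu with hcase | hcase
      · -- layer s < layer u : contradiction with minimality of p0
        exfalso
        obtain ⟨p1, hp1, hp1len⟩ := lower_neighbor_walk k V E layer t hlay'
          (u :: rest).length (u :: rest) le_rfl s u hs huV hsu hcase hwu
        have : sInf S ≤ p1.length := Nat.sInf_le ⟨p1, hp1, rfl⟩
        simp only [List.length_cons] at hp0len hp1len this
        omega
      · -- layer u < layer s : u and v are in the lower clique of s
        have huX : u ∈ V.filter (fun y => s(y, s) ∈ E ∧ layer y < layer s) := by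
          simp only [Finset.mem_filter]
          exact ⟨huV, by rwa [Sym2.eq_swap], hcase⟩
        have hvX : v ∈ V.filter (fun y => s(y, s) ∈ E ∧ layer y < layer s) := by
          simp only [Finset.mem_filter]
          exact ⟨hvV, by rwa [Sym2.eq_swap], hvs⟩
        have hedge : s(v, u) ∈ E := hclqs v hvX u huX hvu
        have hlvu : layer v < layer u :=
          lt_of_le_of_ne (hvmin' u huV hsu) (hneq v hvV u huV hedge)
        obtain ⟨p1, hp1, hp1len⟩ := lower_neighbor_walk k V E layer t hlay'
          (u :: rest).length (u :: rest) le_rfl v u hvV huV hedge hlvu hwu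
        exact ⟨p1, hp1, hp1len⟩
  -- the path s :: qv is a shortest path
  have hwalk : IsWalk V E s t (s :: qv) := walk_extend hs hsv hqv
  refine ⟨s :: qv, ⟨hwalk, ?_⟩, v, ?_, hsv, hvmin'⟩
  · intro q hq
    have h1 : sInf S ≤ q.length := Nat.sInf_le ⟨q, hq, rfl⟩
    simp only [List.length_cons] at hp0len hqvlen ⊢
    omega
  · -- p[1]? = some v
    have : qv.head? = some v := hqv.1
    cases qv with
    | nil => simp at this
    | cons y qv' =>
      simp only [List.head?_cons, Option.some.injEq] at this
      subst this
      simp
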